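/- Let α be a peak composition of n with at most one part greater than 2. Then the map f : RW_c(α) → RW_r(α) determined by f(w_c(T)) = w_r(T) for T ∈ SPIT(α) is a descent-preserving colored digraph isomorphism: f is a bijection, Des(f(γ)) = Des(γ) for every γ ∈ RW_c(α), and for all γ, γ′ ∈ RW_c(α) and all i ∈ {1,…,n−1}, one has (γ ⪯_L γ′ and s_i γ = γ′) if and only if (f(γ) ⪯_L f(γ′) and s_i f(γ) = f(γ′)), where s_i denotes the simple transposition (i, i+1) acting by left multiplication. -/

import Mathlib

namespace PaperSPIT

/-- The `j`-th part (1-indexed) of a composition presented as a list. -/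
def part (α : List ℕ) (j : ℕ) : ℕ := α.getD (j - 1) 0

/-- The largest part. -/
def maxPart (α : List ℕ) : ℕ := α.foldr max 0

/-- The composition diagram: boxes `(i, j)` (column `i`, row `j`), both 1-indexed,
rows numbered from bottom to top. -/
def cd (α : List ℕ) : Finset (ℕ × ℕ) :=
  (Finset.Icc 1 (maxPart α) ×ˢ Finset.Icc 1 α.length).filter fun p => p.1 ≤ part α p.2

/-- `α` is a composition of `n`. -/
def IsComposition (n : ℕ) (α : List ℕ) : Prop :=
  (∀ a ∈ α, 0 < a) ∧ α.sum = n

/-- `α` is a peak composition of `n`: all parts except possibly the last are `> 1`. -/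
def IsPeakComposition (n : ℕ) (α : List ℕ) : Prop :=
  IsComposition n α ∧ ∀ i, i + 1 < α.length → 1 < α.getD i 0

/-- A standard filling of `cd α`: a bijection from the boxes onto `{1, …, n}`
(normalized to be `0` off the diagram). -/
def IsStandardFilling (α : List ℕ) (T : ℕ × ℕ → ℕ) : Prop :=
  Set.BijOn T (cd α : Set (ℕ × ℕ)) (Set.Icc 1 α.sum) ∧
  ∀ p : ℕ × ℕ, p ∉ cd α → T p = 0

def RowsIncrease (α : List ℕ) (T : ℕ × ℕ → ℕ) : Prop :=
  ∀ i j : ℕ, (i, j) ∈ cd α → (i + 1, j) ∈ cd α → T (i, j) < T (i + 1, j)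

def RowsWeaklyIncrease (α : List ℕ) (T : ℕ × ℕ → ℕ) : Prop :=
  ∀ i j : ℕ, (i, j) ∈ cd α → (i + 1, j) ∈ cd α → T (i, j) ≤ T (i + 1, j)

def FirstColIncreases (α : List ℕ) (T : ℕ × ℕ → ℕ) : Prop :=
  ∀ j : ℕ, (1, j) ∈ cd α → (1, j + 1) ∈ cd α → T (1, j) < T (1, j + 1)

/-- Standard immaculate tableau. -/
def IsSIT (α : List ℕ) (T : ℕ × ℕ → ℕ) : Prop :=
  IsStandardFilling α T ∧ RowsIncrease α T ∧ FirstColIncreases α T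

/-- Peak-tableau condition: for every `1 ≤ k ≤ n` the boxes with entries `≤ k`
form the diagram of a peak composition. -/
def PeakCond (α : List ℕ) (T : ℕ × ℕ → ℕ) : Prop :=
  ∀ k : ℕ, 1 ≤ k → k ≤ α.sum → ∃ β : List ℕ,
    IsPeakComposition k β ∧ (cd α).filter (fun p => T p ≤ k) = cd β

/-- Standard peak immaculate tableau. -/
def IsSPIT (α : List ℕ) (T : ℕ × ℕ → ℕ) : Prop := IsSIT α T ∧ PeakCond α T

def SPITset (α : List ℕ) : Set (ℕ × ℕ → ℕ) := {T | IsSPIT α T}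

/-- The Young triple condition. -/
def YoungTriple (α : List ℕ) (T : ℕ × ℕ → ℕ) : Prop :=
  ∀ k i j : ℕ, i < j → (k, j) ∈ cd α → (k + 1, i) ∈ cd α → T (k, j) ≤ T (k + 1, i) →
    (k + 1, j) ∈ cd α ∧ T (k + 1, j) < T (k + 1, i)

/-- Standard Young composition tableau. -/
def IsSYCT (α : List ℕ) (T : ℕ × ℕ → ℕ) : Prop :=
  IsStandardFilling α T ∧ RowsIncrease α T ∧ FirstColIncreases α T ∧ YoungTriple α T

def SYCTset (α : List ℕ) : Set (ℕ × ℕ → ℕ) := {T | IsSYCT α T}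

/-- Standard peak Young composition tableau. -/
def IsSPYCT (α : List ℕ) (T : ℕ × ℕ → ℕ) : Prop := IsSYCT α T ∧ PeakCond α T

def SPYCTset (α : List ℕ) : Set (ℕ × ℕ → ℕ) := {T | IsSPYCT α T}

/-- Row reading word `w_r`: rows from top to bottom, each row left to right. -/
def wR (α : List ℕ) (T : ℕ × ℕ → ℕ) : List ℕ :=
  ((List.range α.length).reverse.map fun j =>
    (List.range (part α (j + 1))).map fun i => T (i + 1, j + 1)).flatten

/-- The `i`-th column of a filling, read bottom to top. -/
def colList (α : List ℕ) (T : ℕ × ℕ → ℕ) (i : ℕ) : List ℕ :=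
  ((List.range α.length).filter fun j => decide (i ≤ part α (j + 1))).map
    fun j => T (i, j + 1)

/-- Column reading word `w_c`: columns left to right, each column bottom to top. -/
def wC (α : List ℕ) (T : ℕ × ℕ → ℕ) : List ℕ :=
  ((List.range (maxPart α)).map fun i => colList α T (i + 1)).flatten

/-- Young reading word `w_Y`: first column top to bottom, then subsequent columns
bottom to top, columns left to right. -/
def wY (α : List ℕ) (T : ℕ × ℕ → ℕ) : List ℕ :=
  (colList α T 1).reverse ++
    ((List.range (maxPart α - 1)).map fun i => colList α T (i + 2)).flatten

/-- Descent set of a word with distinct letters: `i` such that `i` and `i+1` occur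
and `i` occurs to the right of `i+1`. -/
def DesWord (w : List ℕ) : Finset ℕ :=
  w.toFinset.filter fun i => (i + 1) ∈ w ∧ w.idxOf (i + 1) < w.idxOf i


/-- A word of length `n` with distinct letters `1,…,n`, identified with an element of `S_n`
in one-line notation. -/
def IsPermWord (n : ℕ) (w : List ℕ) : Prop := w.Perm (List.range' 1 n)

/-- Inversions of a word (1-indexed positions): pairs `(i,j)` with `i < j` and the letter at
position `i` larger than the letter at position `j`. -/
def InvW (w : List ℕ) : Set (ℕ × ℕ) :=
  {q | 1 ≤ q.1 ∧ q.1 < q.2 ∧ q.2 ≤ w.length ∧ w.getD (q.2 - 1) 0 < w.getD (q.1 - 1) 0}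

/-- The set of column reading words of SPITs of shape `α`. -/
def RWc (α : List ℕ) : Set (List ℕ) := {w | ∃ T ∈ SPITset α, w = wC α T}

/-- The set of row reading words of SPITs of shape `α`. -/
def RWr (α : List ℕ) : Set (List ℕ) := {w | ∃ T ∈ SPITset α, w = wR α T}

/-- The simple transposition `s_i = (i, i+1)` acting on a one-line word by left
multiplication, i.e. by exchanging the letters (values) `i` and `i+1`. -/
def swapVals (i : ℕ) (w : List ℕ) : List ℕ :=
  w.map fun x => if x = i then i + 1 else if x = i + 1 then i else x


/-! ### Auxiliary development -/

section Aux

open List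

/-! #### Generic `indexOf` facts (for arbitrary lawful `BEq`) -/

lemma indexOf_lt_len {γ : Type*} [BEq γ] [LawfulBEq γ] {a : γ} {l : List γ} (h : a ∈ l) :
    l.idxOf a < l.length := by
  induction l with
  | nil => simp at h
  | cons b l ih =>
    rw [List.idxOf_cons]
    cases hba : (b == a) with
    | true => simp
    | false =>
      have h' : a ∈ l := by
        rcases List.mem_cons.mp h with rfl | h'
        · simp at hba
        · exact h'
      simp only [cond_false, List.length_cons]
      exact Nat.succ_lt_succ (ih h')

lemma getElem?_indexOf' {γ : Type*} [BEq γ] [LawfulBEq γ] {a : γ} {l : List γ} (h : a ∈ l) :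
    l[l.idxOf a]? = some a := by
  induction l with
  | nil => simp at h
  | cons b l ih =>
    rw [List.idxOf_cons]
    cases hba : (b == a) with
    | true =>
      have : b = a := eq_of_beq hba
      simp [this]
    | false =>
      have h' : a ∈ l := by
        rcases List.mem_cons.mp h with rfl | h'
        · simp at hba
        · exact h'
      simpa using ih h'

lemma getElem_indexOf' {γ : Type*} [BEq γ] [LawfulBEq γ] {a : γ} {l : List γ} (h : a ∈ l)
    (hlt : l.idxOf a < l.length) : l[l.idxOf a] = a := by
  have h2 := getElem?_indexOf' h
  rw [List.getElem?_eq_getElem hlt] at h2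
  exact Option.some.inj h2

/-! #### Basic facts about `part`, `maxPart`, `cd` -/

lemma le_maxPart {β : List ℕ} {a : ℕ} (ha : a ∈ β) : a ≤ maxPart β := by
  induction β with
  | nil => simp at ha
  | cons b l ih =>
    rcases List.mem_cons.1 ha with rfl | h
    · simp [maxPart]
    · have := ih h
      simp only [maxPart, List.foldr_cons] at *
      omega

lemma part_le_maxPart {β : List ℕ} {j : ℕ} (h1 : 1 ≤ j) (h2 : j ≤ β.length) :
    part β j ≤ maxPart β := by
  have hlt : j - 1 < β.length := by omega
  have : part β j = β[j-1] := List.getD_eq_getElem β 0 hlt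
  rw [this]
  exact le_maxPart (List.getElem_mem hlt)

lemma mem_cd {β : List ℕ} {c j : ℕ} :
    (c, j) ∈ cd β ↔ 1 ≤ c ∧ 1 ≤ j ∧ j ≤ β.length ∧ c ≤ part β j := by
  simp only [cd, Finset.mem_filter, Finset.mem_product, Finset.mem_Icc]
  constructor
  · rintro ⟨⟨⟨hc1, _⟩, hj1, hj2⟩, h⟩; exact ⟨hc1, hj1, hj2, h⟩
  · rintro ⟨hc1, hj1, hj2, h⟩
    exact ⟨⟨⟨hc1, h.trans (part_le_maxPart hj1 hj2)⟩, ⟨hj1, hj2⟩⟩, h⟩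

lemma cd_left {δ : List ℕ} {c j c' : ℕ} (h : (c, j) ∈ cd δ) (h1 : 1 ≤ c') (h2 : c' ≤ c) :
    (c', j) ∈ cd δ := by
  rw [mem_cd] at h ⊢
  exact ⟨h1, h.2.1, h.2.2.1, le_trans h2 h.2.2.2⟩

lemma cd_bottom {δ : List ℕ} (hpos : ∀ a ∈ δ, 0 < a) {j : ℕ} (h1 : 1 ≤ j)
    (h2 : j ≤ δ.length) : (1, j) ∈ cd δ := by
  rw [mem_cd]
  have hlt : j - 1 < δ.length := by omega
  have hp : part δ j = δ[j-1] := List.getD_eq_getElem δ 0 hlt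
  exact ⟨le_refl 1, h1, h2, by rw [hp]; exact hpos _ (List.getElem_mem hlt)⟩

lemma cd_two {δ : List ℕ} (hpk : ∀ i, i + 1 < δ.length → 1 < δ.getD i 0) {j : ℕ}
    (h1 : 1 ≤ j) (h2 : j < δ.length) : (2, j) ∈ cd δ := by
  rw [mem_cd]
  have := hpk (j - 1) (by omega)
  have hp : part δ j = δ.getD (j-1) 0 := rfl
  exact ⟨by omega, h1, by omega, by omega⟩

/-! #### Unpacking SPIT structure -/

lemma T_injOn {α : List ℕ} {T : ℕ × ℕ → ℕ} (hT : IsSPIT α T) :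
    ∀ a ∈ cd α, ∀ b ∈ cd α, T a = T b → a = b :=
  fun a ha b hb h => hT.1.1.1.2.1 (Finset.mem_coe.mpr ha) (Finset.mem_coe.mpr hb) h

lemma T_mem_Icc {α : List ℕ} {T : ℕ × ℕ → ℕ} (hT : IsSPIT α T) {p : ℕ × ℕ}
    (hp : p ∈ cd α) : 1 ≤ T p ∧ T p ≤ α.sum := by
  have := hT.1.1.1.1 (Finset.mem_coe.mpr hp)
  simpa [Set.mem_Icc] using this

lemma T_surj {α : List ℕ} {T : ℕ × ℕ → ℕ} (hT : IsSPIT α T) {x : ℕ}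
    (h1 : 1 ≤ x) (h2 : x ≤ α.sum) : ∃ p ∈ cd α, T p = x := by
  have := hT.1.1.1.2.2 (Set.mem_Icc.mpr ⟨h1, h2⟩)
  obtain ⟨p, hp, hpx⟩ := this
  exact ⟨p, Finset.mem_coe.mp hp, hpx⟩

lemma T_row_lt {α : List ℕ} {T : ℕ × ℕ → ℕ} (hrow : RowsIncrease α T) :
    ∀ c : ℕ, ∀ {c' j : ℕ}, (c, j) ∈ cd α → 1 ≤ c' → c' < c → T (c', j) < T (c, j) := by
  intro c
  induction c with
  | zero => intro c' j _ _ h2; omega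
  | succ c ih =>
    intro c' j h h1 h2
    rcases eq_or_lt_of_le (Nat.lt_succ_iff.mp h2) with rfl | hlt
    · exact hrow c' j (cd_left h h1 (by omega)) h
    · have hc : (c, j) ∈ cd α := cd_left h (by omega) (by omega)
      exact (ih hc h1 hlt).trans (hrow c j hc h)

/-! #### Counting big parts -/

lemma countP_two {l : List ℕ} {P : ℕ → Bool} :
    ∀ {a b : ℕ}, a < b → (hb : b < l.length) → ∀ (ha' : a < l.length),
    P l[a] → P l[b] → 2 ≤ l.countP P := by
  induction l with
  | nil => intro a b _ hb; simp at hb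
  | cons x l ih =>
    intro a b hab hb ha hPa hPb
    rcases a with _ | a
    · have hx : P x := hPa
      rcases b with _ | b
      · omega
      · have hbl : b < l.length := by simpa using hb
        have h1 : 0 < l.countP P :=
          List.countP_pos_iff.mpr ⟨l[b], List.getElem_mem hbl, by simpa using hPb⟩
        simp only [List.countP_cons, hx, if_true]
        omega
    · rcases b with _ | b
      · omega
      · have := ih (a := a) (b := b) (by omega) (by simpa using hb) (by simpa using ha)
          (by simpa using hPa) (by simpa using hPb)
        simp only [List.countP_cons]
        omega

lemma two_big {α : List ℕ} (hone : α.countP (fun a => decide (2 < a)) ≤ 1)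
    {cp rp cq rq : ℕ} (hp : (cp, rp) ∈ cd α) (hq : (cq, rq) ∈ cd α)
    (h3p : 3 ≤ cp) (h3q : 3 ≤ cq) (hne : rp ≠ rq) : False := by
  rw [mem_cd] at hp hq
  obtain ⟨_, hrp1, hrp2, hcp⟩ := hp
  obtain ⟨_, hrq1, hrq2, hcq⟩ := hq
  have hlp : rp - 1 < α.length := by omega
  have hlq : rq - 1 < α.length := by omega
  have hgp : part α rp = α[rp-1] := List.getD_eq_getElem α 0 hlp
  have hgq : part α rq = α[rq-1] := List.getD_eq_getElem α 0 hlq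
  have hPp : (fun a => decide (2 < a)) α[rp-1] = true := by
    simp only [decide_eq_true_eq]; omega
  have hPq : (fun a => decide (2 < a)) α[rq-1] = true := by
    simp only [decide_eq_true_eq]; omega
  have hne' : rp - 1 ≠ rq - 1 := by omega
  rcases Nat.lt_or_ge (rp - 1) (rq - 1) with h | h
  · have := countP_two (l := α) (P := fun a => decide (2 < a)) h hlq hlp hPp hPq; omega
  · have h' : rq - 1 < rp - 1 := by omega
    have := countP_two (l := α) (P := fun a => decide (2 < a)) h' hlp hlq hPq hPp; omega

/-! #### The key structural lemmas -/

lemma shape_mem {α : List ℕ} {T : ℕ × ℕ → ℕ} {k : ℕ} {β : List ℕ}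
    (hEq : (cd α).filter (fun p => T p ≤ k) = cd β) (x : ℕ × ℕ) :
    x ∈ cd β ↔ x ∈ cd α ∧ T x ≤ k := by
  rw [← hEq, Finset.mem_filter]

lemma keyL2 {α : List ℕ} {T : ℕ × ℕ → ℕ}
    (hone : α.countP (fun a => decide (2 < a)) ≤ 1) (hT : IsSPIT α T)
    {i cp rp cq rq : ℕ} (hp : (cp, rp) ∈ cd α) (hq : (cq, rq) ∈ cd α)
    (hpi : T (cp, rp) = i) (hqi : T (cq, rq) = i + 1) (hr : rq < rp) : cp < cq := by
  have hi1 : 1 ≤ i := by have := T_mem_Icc hT hp; omega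
  have hin : i ≤ α.sum := by have := T_mem_Icc hT hq; omega
  obtain ⟨β, hβ, hEq⟩ := hT.2 i hi1 hin
  have memβ := shape_mem hEq
  have hpβ : (cp, rp) ∈ cd β := (memβ _).mpr ⟨hp, le_of_eq hpi⟩
  have hrp : rp ≤ β.length := ((mem_cd).mp hpβ).2.2.1
  have hrq1 : 1 ≤ rq := ((mem_cd).mp hq).2.1
  have hcq1 : 1 ≤ cq := ((mem_cd).mp hq).1
  -- cq ≥ 2
  have hcq2 : 2 ≤ cq := by
    by_contra hcon
    have hcq : cq = 1 := by omega
    have : (1, rq) ∈ cd β := cd_bottom hβ.1.1 hrq1 (by omega)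
    have := ((memβ _).mp this).2
    rw [← hcq] at this
    omega
  -- (2, rq) ∈ cd β
  have h2rq : (2, rq) ∈ cd β := cd_two hβ.2 hrq1 (by omega)
  have h2rq' := (memβ _).mp h2rq
  -- cq ≥ 3
  have hcq3 : 3 ≤ cq := by
    by_contra hcon
    have : cq = 2 := by omega
    rw [this] at hqi
    omega
  by_contra hcon
  exact two_big hone hp hq (by omega) hcq3 (by omega)

lemma keyL1 {α : List ℕ} {T : ℕ × ℕ → ℕ}
    (hone : α.countP (fun a => decide (2 < a)) ≤ 1) (hT : IsSPIT α T)
    {i cp rp cq rq : ℕ} (hp : (cp, rp) ∈ cd α) (hq : (cq, rq) ∈ cd α)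
    (hpi : T (cp, rp) = i) (hqi : T (cq, rq) = i + 1) (hr : rp < rq) : cq < cp := by
  have hrow := hT.1.2.1
  have hinj := T_injOn hT
  have hi1 : 1 ≤ i := by have := T_mem_Icc hT hp; omega
  have hin1 : i + 1 ≤ α.sum := by have := T_mem_Icc hT hq; omega
  have hcp1 : 1 ≤ cp := ((mem_cd).mp hp).1
  have hcq1 : 1 ≤ cq := ((mem_cd).mp hq).1
  have hrp1 : 1 ≤ rp := ((mem_cd).mp hp).2.1
  by_contra hcon
  have hle : cp ≤ cq := by omega
  rcases Nat.lt_or_ge cq 2 with hcq | hcq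
  · -- cq = 1, hence cp = 1
    have hcq' : cq = 1 := by omega
    have hcp' : cp = 1 := by omega
    obtain ⟨β, hβ, hEq⟩ := hT.2 (i + 1) (by omega) hin1
    have memβ := shape_mem hEq
    have hqβ : (cq, rq) ∈ cd β := (memβ _).mpr ⟨hq, le_of_eq hqi⟩
    have hrq : rq ≤ β.length := ((mem_cd).mp hqβ).2.2.1
    have h2rp : (2, rp) ∈ cd β := cd_two hβ.2 hrp1 (by omega)
    have h2rp' := (memβ _).mp h2rp
    have hlt : T (1, rp) < T (2, rp) := hrow 1 rp (by rw [← hcp']; exact hp) h2rp'.1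
    rw [← hcp'] at hlt
    rw [hpi] at hlt
    have hT2 : T (2, rp) = i + 1 := by omega
    have := hinj _ h2rp'.1 _ hq (by rw [hT2, hqi])
    rw [hcq'] at this
    simp only [Prod.mk.injEq] at this
    omega
  · -- cq ≥ 2
    obtain ⟨β, hβ, hEq⟩ := hT.2 i hi1 (by omega)
    have memβ := shape_mem hEq
    -- (1, rq) ∈ cd β
    have h1rqα : (1, rq) ∈ cd α := cd_left hq (le_refl 1) (by omega)
    have h1rqlt : T (1, rq) < T (cq, rq) := T_row_lt hrow cq hq (le_refl 1) (by omega)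
    have h1rqne : T (1, rq) ≠ i := by
      intro h
      have := hinj _ h1rqα _ hp (by rw [h, hpi])
      simp only [Prod.mk.injEq] at this
      omega
    have h1rqβ : (1, rq) ∈ cd β := (memβ _).mpr ⟨h1rqα, by rw [hqi] at h1rqlt; omega⟩
    have hrqβ : rq ≤ β.length := ((mem_cd).mp h1rqβ).2.2.1
    have h2rp : (2, rp) ∈ cd β := cd_two hβ.2 hrp1 (by omega)
    have h2rp' := (memβ _).mp h2rp
    -- cp ≠ 1
    have hcp2 : 2 ≤ cp := by
      by_contra hcon2
      have hcp' : cp = 1 := by omega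
      have hlt : T (1, rp) < T (2, rp) := hrow 1 rp (by rw [← hcp']; exact hp) h2rp'.1
      rw [← hcp', hpi] at hlt
      omega
    rcases Nat.lt_or_ge cp 3 with hcp3 | hcp3
    · -- cp = 2
      have hcp' : cp = 2 := by omega
      have h1rpα : (1, rp) ∈ cd α := cd_left hp (le_refl 1) hcp1
      have h1rplt : T (1, rp) < T (cp, rp) := T_row_lt hrow cp hp (le_refl 1) (by omega)
      have hi2 : 2 ≤ i := by
        have := T_mem_Icc hT h1rpα
        rw [hpi] at h1rplt
        omega
      obtain ⟨β', hβ', hEq'⟩ := hT.2 (i - 1) (by omega) (by omega)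
      have memβ' := shape_mem hEq'
      have h1rqβ' : (1, rq) ∈ cd β' :=
        (memβ' _).mpr ⟨h1rqα, by rw [hqi] at h1rqlt; omega⟩
      have hrqβ' : rq ≤ β'.length := ((mem_cd).mp h1rqβ').2.2.1
      have h2rpβ' : (2, rp) ∈ cd β' := cd_two hβ'.2 hrp1 (by omega)
      have := ((memβ' _).mp h2rpβ').2
      rw [← hcp'] at this
      rw [hpi] at this
      omega
    · exact two_big hone hp hq hcp3 (by omega) (by omega)

/-! #### Box orders and reading orders -/

def colLT (p q : ℕ × ℕ) : Prop := p.1 < q.1 ∨ (p.1 = q.1 ∧ p.2 < q.2)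

def rowLT (p q : ℕ × ℕ) : Prop := q.2 < p.2 ∨ (p.2 = q.2 ∧ p.1 < q.1)

lemma colLT_asymm : ∀ p q : ℕ × ℕ, colLT p q → colLT q p → False := by
  rintro ⟨a, b⟩ ⟨c, d⟩ h1 h2
  have h1' : a < c ∨ (a = c ∧ b < d) := h1
  have h2' : c < a ∨ (c = a ∧ d < b) := h2
  omega

lemma rowLT_asymm : ∀ p q : ℕ × ℕ, rowLT p q → rowLT q p → False := by
  rintro ⟨a, b⟩ ⟨c, d⟩ h1 h2
  have h1' : d < b ∨ (b = d ∧ a < c) := h1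
  have h2' : b < d ∨ (d = b ∧ c < a) := h2
  omega

lemma colLT_neg {p q : ℕ × ℕ} (h : p ≠ q) : colLT q p ↔ ¬ colLT p q := by
  obtain ⟨a, b⟩ := p; obtain ⟨c, d⟩ := q
  simp only [ne_eq, Prod.mk.injEq, not_and] at h
  show (c < a ∨ (c = a ∧ d < b)) ↔ ¬ (a < c ∨ (a = c ∧ b < d))
  by_cases hac : a = c
  · subst hac
    have hbd : ¬ b = d := h rfl
    omega
  · omega

lemma rowLT_neg {p q : ℕ × ℕ} (h : p ≠ q) : rowLT q p ↔ ¬ rowLT p q := by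
  obtain ⟨a, b⟩ := p; obtain ⟨c, d⟩ := q
  simp only [ne_eq, Prod.mk.injEq, not_and] at h
  show (b < d ∨ (d = b ∧ c < a)) ↔ ¬ (d < b ∨ (b = d ∧ a < c))
  by_cases hbd : b = d
  · subst hbd
    have : ¬ a = c := fun hh => h hh rfl
    omega
  · omega

/-- Core lemma: for consecutive entries the column order and row order agree. -/
lemma core {α : List ℕ} {T : ℕ × ℕ → ℕ}
    (hone : α.countP (fun a => decide (2 < a)) ≤ 1) (hT : IsSPIT α T)
    {i : ℕ} {p q : ℕ × ℕ} (hp : p ∈ cd α) (hq : q ∈ cd α)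
    (hpi : T p = i) (hqi : T q = i + 1) : (colLT p q ↔ rowLT p q) := by
  obtain ⟨cp, rp⟩ := p; obtain ⟨cq, rq⟩ := q
  show (cp < cq ∨ (cp = cq ∧ rp < rq)) ↔ (rq < rp ∨ (rp = rq ∧ cp < cq))
  rcases lt_trichotomy rp rq with h | h | h
  · have := keyL1 hone hT hp hq hpi hqi h
    omega
  · omega
  · have := keyL2 hone hT hp hq hpi hqi h
    omega

/-! #### Reading words as maps over box lists -/

def colBoxes (α : List ℕ) : List (ℕ × ℕ) :=
  ((List.range (maxPart α)).map fun i =>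
    ((List.range α.length).filter fun j => decide (i + 1 ≤ part α (j + 1))).map
      fun j => (i + 1, j + 1)).flatten

def rowBoxes (α : List ℕ) : List (ℕ × ℕ) :=
  ((List.range α.length).reverse.map fun j =>
    (List.range (part α (j + 1))).map fun i => (i + 1, j + 1)).flatten

lemma wC_eq (α : List ℕ) (T : ℕ × ℕ → ℕ) : wC α T = (colBoxes α).map T := by
  simp only [wC, colBoxes, colList, List.map_flatten, List.map_map]
  congr 1
  apply List.map_congr_left
  intro i _
  simp [List.map_map, Function.comp]

lemma wR_eq (α : List ℕ) (T : ℕ × ℕ → ℕ) : wR α T = (rowBoxes α).map T := by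
  simp only [wR, rowBoxes, List.map_flatten, List.map_map]
  congr 1
  apply List.map_congr_left
  intro j _
  simp [List.map_map, Function.comp]

lemma mem_colBoxes {α : List ℕ} {p : ℕ × ℕ} : p ∈ colBoxes α ↔ p ∈ cd α := by
  obtain ⟨c, r⟩ := p
  simp only [colBoxes, List.mem_flatten, List.mem_map, List.mem_filter, List.mem_range,
    mem_cd, decide_eq_true_eq]
  constructor
  · rintro ⟨l, ⟨i, hi, rfl⟩, hp⟩
    simp only [List.mem_map, List.mem_filter, List.mem_range, decide_eq_true_eq] at hp
    obtain ⟨j, ⟨hj, hle⟩, heq⟩ := hp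
    obtain ⟨h1, h2⟩ := Prod.mk.injEq .. ▸ heq
    refine ⟨by omega, by omega, by omega, ?_⟩
    subst h1; subst h2
    exact hle
  · rintro ⟨hc1, hr1, hr2, hle⟩
    refine ⟨_, ⟨c - 1, ?_, rfl⟩, ?_⟩
    · have : c ≤ maxPart α := hle.trans (part_le_maxPart hr1 hr2)
      omega
    · simp only [List.mem_map, List.mem_filter, List.mem_range, decide_eq_true_eq]
      refine ⟨r - 1, ⟨by omega, ?_⟩, ?_⟩
      · have h1 : c - 1 + 1 = c := by omega
        have h2 : r - 1 + 1 = r := by omega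
        rw [h1, h2]; exact hle
      · have h1 : c - 1 + 1 = c := by omega
        have h2 : r - 1 + 1 = r := by omega
        rw [h1, h2]

lemma mem_rowBoxes {α : List ℕ} {p : ℕ × ℕ} : p ∈ rowBoxes α ↔ p ∈ cd α := by
  obtain ⟨c, r⟩ := p
  simp only [rowBoxes, List.mem_flatten, List.mem_map, List.mem_reverse, List.mem_range, mem_cd]
  constructor
  · rintro ⟨l, ⟨j, hj, rfl⟩, hp⟩
    simp only [List.mem_map, List.mem_range] at hp
    obtain ⟨i, hi, heq⟩ := hp
    obtain ⟨h1, h2⟩ := Prod.mk.injEq .. ▸ heq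
    refine ⟨by omega, by omega, by omega, ?_⟩
    subst h1; subst h2
    omega
  · rintro ⟨hc1, hr1, hr2, hle⟩
    refine ⟨_, ⟨r - 1, by omega, rfl⟩, ?_⟩
    simp only [List.mem_map, List.mem_range]
    refine ⟨c - 1, ?_, ?_⟩
    · have h2 : r - 1 + 1 = r := by omega
      rw [h2]; omega
    · have h1 : c - 1 + 1 = c := by omega
      have h2 : r - 1 + 1 = r := by omega
      rw [h1, h2]

lemma pairwise_colBoxes (α : List ℕ) : (colBoxes α).Pairwise colLT := by
  rw [colBoxes, List.pairwise_flatten]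
  constructor
  · rintro l hl
    simp only [List.mem_map, List.mem_range] at hl
    obtain ⟨i, hi, rfl⟩ := hl
    rw [List.pairwise_map]
    exact ((List.pairwise_lt_range).filter _).imp fun h => Or.inr ⟨rfl, by omega⟩
  · rw [List.pairwise_map]
    apply (List.pairwise_lt_range).imp
    intro i i' hii a ha b hb
    simp only [List.mem_map, List.mem_filter, List.mem_range] at ha hb
    obtain ⟨j, _, rfl⟩ := ha
    obtain ⟨j', _, rfl⟩ := hb
    exact Or.inl (by omega)

lemma pairwise_rowBoxes (α : List ℕ) : (rowBoxes α).Pairwise rowLT := by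
  rw [rowBoxes, List.pairwise_flatten]
  constructor
  · rintro l hl
    simp only [List.mem_map, List.mem_reverse, List.mem_range] at hl
    obtain ⟨j, hj, rfl⟩ := hl
    rw [List.pairwise_map]
    exact (List.pairwise_lt_range).imp fun h => Or.inr ⟨rfl, by omega⟩
  · rw [List.pairwise_map, List.pairwise_reverse]
    apply (List.pairwise_lt_range).imp
    intro j j' hjj a ha b hb
    simp only [List.mem_map, List.mem_range] at ha hb
    obtain ⟨i, _, rfl⟩ := ha
    obtain ⟨i', _, rfl⟩ := hb
    exact Or.inl (by omega)

lemma nodup_colBoxes (α : List ℕ) : (colBoxes α).Nodup :=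
  (pairwise_colBoxes α).imp fun h => by
    intro he; subst he; exact colLT_asymm _ _ h h

lemma nodup_rowBoxes (α : List ℕ) : (rowBoxes α).Nodup :=
  (pairwise_rowBoxes α).imp fun h => by
    intro he; subst he; exact rowLT_asymm _ _ h h

/-! #### Index lemmas -/

lemma idx_lt_iff {l : List (ℕ × ℕ)} {R : ℕ × ℕ → ℕ × ℕ → Prop}
    (hasym : ∀ a b, R a b → R b a → False) (h : l.Pairwise R)
    {p q : ℕ × ℕ} (hp : p ∈ l) (hq : q ∈ l) :
    l.idxOf p < l.idxOf q ↔ R p q := by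
  have hP := List.pairwise_iff_getElem.mp h
  have hpl : l.idxOf p < l.length := indexOf_lt_len hp
  have hql : l.idxOf q < l.length := indexOf_lt_len hq
  have hgp : l[l.idxOf p] = p := getElem_indexOf' hp hpl
  have hgq : l[l.idxOf q] = q := getElem_indexOf' hq hql
  constructor
  · intro hlt
    have := hP _ _ hpl hql hlt
    rwa [hgp, hgq] at this
  · intro hR
    rcases lt_trichotomy (l.idxOf p) (l.idxOf q) with h1 | h1 | h1
    · exact h1
    · exfalso
      have hpq : p = q := by
        rw [← hgp, ← hgq]
        simp only [h1]
      subst hpq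
      exact hasym p p hR hR
    · exfalso
      have := hP _ _ hql hpl h1
      rw [hgp, hgq] at this
      exact hasym p q hR this

lemma indexOf_map {l : List (ℕ × ℕ)} {T : ℕ × ℕ → ℕ}
    (hinj : ∀ a ∈ l, ∀ b ∈ l, T a = T b → a = b) {p : ℕ × ℕ} (hp : p ∈ l) :
    (l.map T).idxOf (T p) = l.idxOf p := by
  induction l with
  | nil => simp at hp
  | cons a l ih =>
    by_cases hap : a = p
    · subst hap
      simp [List.idxOf_cons]
    · have hTa : (T a == T p) = false := by
        simp only [beq_eq_false_iff_ne, ne_eq]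
        intro h
        exact hap (hinj a (List.mem_cons_self) p hp h)
      have hap' : (a == p) = false := by simp [hap]
      have hp' : p ∈ l := by
        rcases List.mem_cons.mp hp with h | h
        · exact absurd h.symm hap
        · exact h
      rw [List.map_cons, List.idxOf_cons, List.idxOf_cons, hTa, hap']
      simp only [cond_false]
      rw [ih (fun x hx y hy => hinj x (List.mem_cons_of_mem _ hx) y (List.mem_cons_of_mem _ hy)) hp']

lemma mem_wC {α : List ℕ} {T : ℕ × ℕ → ℕ} {x : ℕ} :
    x ∈ wC α T ↔ ∃ p ∈ cd α, T p = x := by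
  rw [wC_eq]
  simp only [List.mem_map, mem_colBoxes]

lemma mem_wR {α : List ℕ} {T : ℕ × ℕ → ℕ} {x : ℕ} :
    x ∈ wR α T ↔ ∃ p ∈ cd α, T p = x := by
  rw [wR_eq]
  simp only [List.mem_map, mem_rowBoxes]

lemma indexOf_wC_lt {α : List ℕ} {T : ℕ × ℕ → ℕ} (hT : IsSPIT α T) {p q : ℕ × ℕ}
    (hp : p ∈ cd α) (hq : q ∈ cd α) :
    ((wC α T).idxOf (T p) < (wC α T).idxOf (T q) ↔ colLT p q) := by
  have hinj' : ∀ a ∈ colBoxes α, ∀ b ∈ colBoxes α, T a = T b → a = b :=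
    fun a ha b hb h => T_injOn hT a (mem_colBoxes.mp ha) b (mem_colBoxes.mp hb) h
  rw [wC_eq, indexOf_map hinj' (mem_colBoxes.mpr hp),
    indexOf_map hinj' (mem_colBoxes.mpr hq)]
  exact idx_lt_iff colLT_asymm (pairwise_colBoxes α) (mem_colBoxes.mpr hp)
    (mem_colBoxes.mpr hq)

lemma indexOf_wR_lt {α : List ℕ} {T : ℕ × ℕ → ℕ} (hT : IsSPIT α T) {p q : ℕ × ℕ}
    (hp : p ∈ cd α) (hq : q ∈ cd α) :
    ((wR α T).idxOf (T p) < (wR α T).idxOf (T q) ↔ rowLT p q) := by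
  have hinj' : ∀ a ∈ rowBoxes α, ∀ b ∈ rowBoxes α, T a = T b → a = b :=
    fun a ha b hb h => T_injOn hT a (mem_rowBoxes.mp ha) b (mem_rowBoxes.mp hb) h
  rw [wR_eq, indexOf_map hinj' (mem_rowBoxes.mpr hp),
    indexOf_map hinj' (mem_rowBoxes.mpr hq)]
  exact idx_lt_iff rowLT_asymm (pairwise_rowBoxes α) (mem_rowBoxes.mpr hp)
    (mem_rowBoxes.mpr hq)

lemma nodup_wC {α : List ℕ} {T : ℕ × ℕ → ℕ} (hT : IsSPIT α T) : (wC α T).Nodup := by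
  rw [wC_eq]
  exact List.Nodup.map_on
    (fun a ha b hb h => T_injOn hT a (mem_colBoxes.mp ha) b (mem_colBoxes.mp hb) h)
    (nodup_colBoxes α)

lemma nodup_wR {α : List ℕ} {T : ℕ × ℕ → ℕ} (hT : IsSPIT α T) : (wR α T).Nodup := by
  rw [wR_eq]
  exact List.Nodup.map_on
    (fun a ha b hb h => T_injOn hT a (mem_rowBoxes.mp ha) b (mem_rowBoxes.mp hb) h)
    (nodup_rowBoxes α)

/-- Order transfer: for consecutive values, relative order in `wC` and `wR` agree. -/
lemma order_transfer {α : List ℕ} {T : ℕ × ℕ → ℕ}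
    (hone : α.countP (fun a => decide (2 < a)) ≤ 1) (hT : IsSPIT α T)
    {i : ℕ} {p q : ℕ × ℕ} (hp : p ∈ cd α) (hq : q ∈ cd α)
    (hpi : T p = i) (hqi : T q = i + 1) :
    ((wC α T).idxOf (i + 1) < (wC α T).idxOf i ↔
      (wR α T).idxOf (i + 1) < (wR α T).idxOf i) ∧
    ((wC α T).idxOf i < (wC α T).idxOf (i + 1) ↔
      (wR α T).idxOf i < (wR α T).idxOf (i + 1)) := by
  have hne : p ≠ q := by
    intro h; rw [h, hqi] at hpi; omega
  have hcore := core hone hT hp hq hpi hqi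
  have hcore' : colLT q p ↔ rowLT q p := by
    rw [colLT_neg hne, rowLT_neg hne, hcore]
  subst hpi
  constructor
  · rw [← hqi, indexOf_wC_lt hT hq hp, indexOf_wR_lt hT hq hp]
    exact hcore'
  · rw [← hqi, indexOf_wC_lt hT hp hq, indexOf_wR_lt hT hp hq]
    exact hcore

/-! #### Inversions and swaps -/

lemma getD_swapVals (i : ℕ) (hi : 1 ≤ i) (w : List ℕ) (t : ℕ) :
    (swapVals i w).getD t 0 =
      (fun x => if x = i then i + 1 else if x = i + 1 then i else x) (w.getD t 0) := by
  by_cases ht : t < w.length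
  · have ht' : t < (swapVals i w).length := by simpa [swapVals] using ht
    rw [List.getD_eq_getElem _ _ ht', List.getD_eq_getElem _ _ ht]
    simp [swapVals]
  · have h1 : w.length ≤ t := by omega
    have h2 : (swapVals i w).length ≤ t := by simpa [swapVals] using h1
    rw [List.getD_eq_default _ _ h1, List.getD_eq_default _ _ h2]
    simp only []
    rw [if_neg (by omega), if_neg (by omega)]

lemma invW_swap_iff {w : List ℕ} (hw : w.Nodup) {i : ℕ} (hi : 1 ≤ i)
    (hm : i ∈ w) (hm1 : i + 1 ∈ w) :
    (InvW w ⊆ InvW (swapVals i w)) ↔ w.idxOf i < w.idxOf (i + 1) := by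
  have ha : w.idxOf i < w.length := indexOf_lt_len hm
  have hb : w.idxOf (i + 1) < w.length := indexOf_lt_len hm1
  have hga : w[w.idxOf i] = i := getElem_indexOf' hm ha
  have hgb : w[w.idxOf (i + 1)] = i + 1 := getElem_indexOf' hm1 hb
  have hab : w.idxOf i ≠ w.idxOf (i + 1) := by
    intro h
    have h2 : w[w.idxOf i] = w[w.idxOf (i + 1)] := by simp only [h]
    rw [hga, hgb] at h2
    omega
  have hlen : (swapVals i w).length = w.length := by simp [swapVals]
  have huniq : ∀ t, (ht : t < w.length) → w[t] = i → t = w.idxOf i := by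
    intro t ht h
    have h2 : w[t] = w[w.idxOf i] := by rw [h, hga]
    exact (hw.getElem_inj_iff).mp h2
  have huniq1 : ∀ t, (ht : t < w.length) → w[t] = i + 1 → t = w.idxOf (i + 1) := by
    intro t ht h
    have h2 : w[t] = w[w.idxOf (i + 1)] := by rw [h, hgb]
    exact (hw.getElem_inj_iff).mp h2
  constructor
  · intro hsub
    by_contra hcon
    have hba : w.idxOf (i + 1) < w.idxOf i := by omega
    have hmem : (w.idxOf (i + 1) + 1, w.idxOf i + 1) ∈ InvW w := by
      refine ⟨by omega, by omega, by omega, ?_⟩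
      simp only [Nat.add_sub_cancel]
      rw [List.getD_eq_getElem _ _ ha, List.getD_eq_getElem _ _ hb, hga, hgb]
      omega
    obtain ⟨-, -, -, h4⟩ := hsub hmem
    simp only [Nat.add_sub_cancel, getD_swapVals i hi] at h4
    rw [List.getD_eq_getElem _ _ ha, List.getD_eq_getElem _ _ hb] at h4
    simp only [hga, hgb] at h4
    split_ifs at h4 <;> omega
  · intro hlt q hq
    obtain ⟨h1, h2, h3, h4⟩ := hq
    refine ⟨h1, h2, by rwa [hlen], ?_⟩
    have hs : q.1 - 1 < w.length := by omega
    have ht : q.2 - 1 < w.length := by omega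
    simp only [getD_swapVals i hi]
    rw [List.getD_eq_getElem _ _ ht, List.getD_eq_getElem _ _ hs] at h4 ⊢
    have hst : q.1 - 1 < q.2 - 1 := by omega
    by_cases hxi : w[q.1 - 1] = i
    · have hsa : q.1 - 1 = w.idxOf i := huniq _ hs hxi
      have hyne : ¬ w[q.2 - 1] = i := by omega
      have hyne1 : ¬ w[q.2 - 1] = i + 1 := by omega
      rw [if_pos hxi, if_neg hyne, if_neg hyne1]
      omega
    · by_cases hxi1 : w[q.1 - 1] = i + 1
      · have hsb : q.1 - 1 = w.idxOf (i + 1) := huniq1 _ hs hxi1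
        have hyne1 : ¬ w[q.2 - 1] = i + 1 := by omega
        have hyne : ¬ w[q.2 - 1] = i := by
          intro hyi
          have hta : q.2 - 1 = w.idxOf i := huniq _ ht hyi
          omega
        rw [if_neg hxi, if_pos hxi1, if_neg hyne, if_neg hyne1]
        omega
      · rw [if_neg hxi, if_neg hxi1]
        by_cases hyi : w[q.2 - 1] = i
        · rw [if_pos hyi]
          omega
        · by_cases hyi1 : w[q.2 - 1] = i + 1
          · rw [if_neg hyi, if_pos hyi1]
            omega
          · rw [if_neg hyi, if_neg hyi1]
            exact h4

lemma swapVals_wC (α : List ℕ) (T : ℕ × ℕ → ℕ) (i : ℕ) :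
    swapVals i (wC α T) =
      (colBoxes α).map (fun p => if T p = i then i + 1 else if T p = i + 1 then i else T p) := by
  rw [wC_eq, swapVals, List.map_map]
  rfl

lemma swapVals_wR (α : List ℕ) (T : ℕ × ℕ → ℕ) (i : ℕ) :
    swapVals i (wR α T) =
      (rowBoxes α).map (fun p => if T p = i then i + 1 else if T p = i + 1 then i else T p) := by
  rw [wR_eq, swapVals, List.map_map]
  rfl

lemma Tof_eq {α : List ℕ} (T : ℕ × ℕ → ℕ) {p : ℕ × ℕ} (hp : p ∈ cd α) :
    (wC α T).getD ((colBoxes α).idxOf p) 0 = T p := by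
  have hm : p ∈ colBoxes α := mem_colBoxes.mpr hp
  have hl : (colBoxes α).idxOf p < (colBoxes α).length := indexOf_lt_len hm
  rw [wC_eq, List.getD_eq_getElem _ _ (by simpa using hl), List.getElem_map,
    getElem_indexOf' hm hl]

/-- The bijection, defined by reconstructing the tableau from a column word. -/
def Fmap (α : List ℕ) : List ℕ → List ℕ := fun w =>
  wR α (fun p => if p ∈ cd α then w.getD ((colBoxes α).idxOf p) 0 else 0)

lemma Fmap_wC {α : List ℕ} (T : ℕ × ℕ → ℕ) : Fmap α (wC α T) = wR α T := by
  unfold Fmap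
  rw [wR_eq, wR_eq]
  apply List.map_congr_left
  intro p hp
  have hp' : p ∈ cd α := mem_rowBoxes.mp hp
  rw [if_pos hp', Tof_eq T hp']

end Aux

/-- Let `α` be a peak composition of `n` with at most one part greater
than `2`. The map `f : RW_c(α) → RW_r(α)` determined by `f(w_c(T)) = w_r(T)` is a
descent-preserving colored digraph isomorphism. -/
theorem descent_preserving_colored_digraph_iso (n : ℕ) (α : List ℕ)
    (hα : IsPeakComposition n α) (hone : α.countP (fun a => decide (2 < a)) ≤ 1) :
    ∃ f : List ℕ → List ℕ,
      (∀ T ∈ SPITset α, f (wC α T) = wR α T) ∧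
      Set.BijOn f (RWc α) (RWr α) ∧
      (∀ γ ∈ RWc α, DesWord (f γ) = DesWord γ) ∧
      (∀ γ ∈ RWc α, ∀ γ' ∈ RWc α, ∀ i : ℕ, 1 ≤ i → i ≤ n - 1 →
        ((InvW γ ⊆ InvW γ' ∧ swapVals i γ = γ') ↔
          (InvW (f γ) ⊆ InvW (f γ') ∧ swapVals i (f γ) = f γ'))) := by
  obtain ⟨⟨hpos, hsum⟩, hpk⟩ := hα
  refine ⟨Fmap α, fun T _ => Fmap_wC T, ⟨?_, ?_, ?_⟩, ?_, ?_⟩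
  · -- MapsTo
    rintro γ ⟨T, hT, rfl⟩
    exact ⟨T, hT, Fmap_wC T⟩
  · -- InjOn
    rintro γ1 ⟨T1, hT1, rfl⟩ γ2 ⟨T2, hT2, rfl⟩ heq
    rw [Fmap_wC T1, Fmap_wC T2, wR_eq, wR_eq, List.map_inj_left] at heq
    rw [wC_eq, wC_eq, List.map_inj_left]
    intro p hp
    exact heq p (mem_rowBoxes.mpr (mem_colBoxes.mp hp))
  · -- SurjOn
    rintro δ ⟨T, hT, rfl⟩
    exact ⟨wC α T, ⟨T, hT, rfl⟩, Fmap_wC T⟩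
  · -- Descents
    rintro γ ⟨T, hT, rfl⟩
    rw [Fmap_wC T]
    ext i
    simp only [DesWord, Finset.mem_filter, List.mem_toFinset]
    constructor
    · rintro ⟨h1, h2, h3⟩
      obtain ⟨p, hp, hpi⟩ := mem_wR.mp h1
      obtain ⟨q, hq, hqi⟩ := mem_wR.mp h2
      refine ⟨mem_wC.mpr ⟨p, hp, hpi⟩, mem_wC.mpr ⟨q, hq, hqi⟩, ?_⟩
      exact ((order_transfer hone hT hp hq hpi hqi).1).mpr h3
    · rintro ⟨h1, h2, h3⟩
      obtain ⟨p, hp, hpi⟩ := mem_wC.mp h1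
      obtain ⟨q, hq, hqi⟩ := mem_wC.mp h2
      refine ⟨mem_wR.mpr ⟨p, hp, hpi⟩, mem_wR.mpr ⟨q, hq, hqi⟩, ?_⟩
      exact ((order_transfer hone hT hp hq hpi hqi).1).mp h3
  · -- Colored digraph edges
    rintro γ ⟨T, hT, rfl⟩ γ' ⟨T', hT', rfl⟩ i hi1 hi2
    rw [Fmap_wC T, Fmap_wC T']
    have hin : i + 1 ≤ α.sum := by omega
    obtain ⟨p, hp, hpi⟩ := T_surj hT hi1 (by omega)
    obtain ⟨q, hq, hqi⟩ := T_surj hT (by omega) hin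
    have hmemC : i ∈ wC α T := mem_wC.mpr ⟨p, hp, hpi⟩
    have hmemC1 : i + 1 ∈ wC α T := mem_wC.mpr ⟨q, hq, hqi⟩
    have hmemR : i ∈ wR α T := mem_wR.mpr ⟨p, hp, hpi⟩
    have hmemR1 : i + 1 ∈ wR α T := mem_wR.mpr ⟨q, hq, hqi⟩
    have hswC : swapVals i (wC α T) = wC α T' ↔ ∀ r ∈ cd α,
        (if T r = i then i + 1 else if T r = i + 1 then i else T r) = T' r := by
      rw [swapVals_wC, wC_eq, List.map_inj_left]
      exact ⟨fun h r hr => h r (mem_colBoxes.mpr hr), fun h r hr => h r (mem_colBoxes.mp hr)⟩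
    have hswR : swapVals i (wR α T) = wR α T' ↔ ∀ r ∈ cd α,
        (if T r = i then i + 1 else if T r = i + 1 then i else T r) = T' r := by
      rw [swapVals_wR, wR_eq, List.map_inj_left]
      exact ⟨fun h r hr => h r (mem_rowBoxes.mpr hr), fun h r hr => h r (mem_rowBoxes.mp hr)⟩
    have hswap_iff : swapVals i (wC α T) = wC α T' ↔ swapVals i (wR α T) = wR α T' := by
      rw [hswC, hswR]
    have htrans := (order_transfer hone hT hp hq hpi hqi).2
    constructor
    · rintro ⟨hinv, hs⟩
      have hs' := hswap_iff.mp hs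
      refine ⟨?_, hs'⟩
      rw [← hs']
      rw [← hs] at hinv
      exact (invW_swap_iff (nodup_wR hT) hi1 hmemR hmemR1).mpr
        (htrans.mp ((invW_swap_iff (nodup_wC hT) hi1 hmemC hmemC1).mp hinv))
    · rintro ⟨hinv, hs'⟩
      have hs := hswap_iff.mpr hs'
      refine ⟨?_, hs⟩
      rw [← hs]
      rw [← hs'] at hinv
      exact (invW_swap_iff (nodup_wC hT) hi1 hmemC hmemC1).mpr
        (htrans.mpr ((invW_swap_iff (nodup_wR hT) hi1 hmemR hmemR1).mp hinv))

end PaperSPIT
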